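/- For every integer N ≥ 1, consider for each s ∈ S := {1, …, N} the Needle objective f_s : S → {0,1} with f_s(x) = 1 if x = s and f_s(x) = 0 otherwise, with target set {s}. Then the infimum, over all randomized strategies μ on deterministic strategies q : List {0,1} → S, of sup_{s ∈ S} E_{q∼μ}[τ(q, f_s, {s})] equals (N+1)/2; concretely, (a) for every randomized strategy μ there exists s ∈ S with E_{q∼μ}[τ(q, f_s, {s})] ≥ (N+1)/2, and (b) there exists a randomized strategy μ with E_{q∼μ}[τ(q, f_s, {s})] ≤ (N+1)/2 for every s ∈ S. -/

import Mathlib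

open scoped ENNReal

namespace BBC

variable {S V : Type*}

/-- The history of observed objective values after `t` queries:
`hist q f t = [f x₁, …, f x_t]`, where `x₁ = q []` and
`x_{t+1} = q [f x₁, …, f x_t]`. -/
def hist (q : List V → S) (f : S → V) : ℕ → List V
  | 0 => []
  | t + 1 => hist q f t ++ [f (q (hist q f t))]

/-- `queryPt q f t` is the `(t+1)`-st queried search point `x_{t+1}`. -/
def queryPt (q : List V → S) (f : S → V) (t : ℕ) : S := q (hist q f t)

/-- The hitting time of a deterministic strategy `q` on objective `f` with
target set `M`: the least `t ≥ 1` with `x_t ∈ M`, valued in `ℕ∞`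
(and `⊤` if no query ever hits `M`). -/
noncomputable def hitTime (q : List V → S) (f : S → V) (M : Set S) : ℕ∞ :=
  sInf ((fun k : ℕ => (k : ℕ∞) + 1) '' {k | queryPt q f k ∈ M})

/-- The expected hitting time of a randomized strategy `μ` (a probability mass
function on deterministic strategies) on `(f, M)`, valued in `[0,∞]`. -/
noncomputable def expHitTime (μ : PMF (List V → S)) (f : S → V) (M : Set S) : ℝ≥0∞ :=
  ∑' q, μ q * (hitTime q f M : ℝ≥0∞)

end BBC

namespace NeedleAux

open BBC Finset

/-- The sequence of points a strategy queries while seeing only `false`. -/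
def seq {N : ℕ} (q : List Bool → Fin N) (k : ℕ) : Fin N := q (List.replicate k false)

lemma hist_replicate {N : ℕ} (q : List Bool → Fin N) (s : Fin N) (t : ℕ)
    (h : ∀ j < t, seq q j ≠ s) :
    BBC.hist q (fun x => decide (x = s)) t = List.replicate t false := by
  induction t with
  | zero => rfl
  | succ t ih =>
    have ht := ih (fun j hj => h j (Nat.lt_succ_of_lt hj))
    have hne : seq q t ≠ s := h t (Nat.lt_succ_self t)
    show BBC.hist q _ t ++ _ = _
    rw [ht, List.replicate_succ']
    congr 1
    simp [seq] at hne ⊢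
    exact hne

lemma queryPt_eq {N : ℕ} (q : List Bool → Fin N) (s : Fin N) (t : ℕ)
    (h : ∀ j < t, seq q j ≠ s) :
    BBC.queryPt q (fun x => decide (x = s)) t = seq q t := by
  unfold BBC.queryPt
  rw [hist_replicate q s t h]
  rfl

lemma hitTime_eq_top {N : ℕ} (q : List Bool → Fin N) (s : Fin N)
    (h : ∀ k, seq q k ≠ s) :
    BBC.hitTime q (fun x => decide (x = s)) {s} = ⊤ := by
  unfold BBC.hitTime
  convert sInf_empty
  · rfl
  rw [Set.image_eq_empty]
  ext k
  simp only [Set.mem_setOf_eq, Set.mem_empty_iff_false, iff_false, Set.mem_singleton_iff]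
  rw [queryPt_eq q s k (fun j _ => h j)]
  exact h k

lemma hitTime_eq {N : ℕ} (q : List Bool → Fin N) (s : Fin N) (k0 : ℕ)
    (hk0 : seq q k0 = s) (hmin : ∀ j < k0, seq q j ≠ s) :
    BBC.hitTime q (fun x => decide (x = s)) {s} = (k0 : ℕ∞) + 1 := by
  unfold BBC.hitTime
  apply le_antisymm
  · apply sInf_le
    refine ⟨k0, ?_, rfl⟩
    show BBC.queryPt _ _ _ ∈ ({s} : Set (Fin N))
    rw [Set.mem_singleton_iff, queryPt_eq q s k0 hmin]
    exact hk0
  · apply le_sInf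
    rintro x ⟨k, hk, rfl⟩
    simp only [Set.mem_setOf_eq, Set.mem_singleton_iff] at hk
    have hk0k : k0 ≤ k := by
      by_contra hlt
      push_neg at hlt
      have := queryPt_eq q s k (fun j hj => hmin j (hj.trans hlt))
      rw [this] at hk
      exact hmin k hlt hk
    exact add_le_add_left (by exact_mod_cast hk0k) 1

/-- triangle number bound for sums over finsets of naturals -/
lemma triangle_le_sum : ∀ (n : ℕ) (A : Finset ℕ), A.card = n →
    ∑ i ∈ Finset.range n, i ≤ ∑ a ∈ A, a := by
  intro n
  induction n with
  | zero => intro A h; simp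
  | succ n ih =>
    intro A h
    have hne : A.Nonempty := Finset.card_pos.mp (by omega)
    set m := A.max' hne with hm
    have hmem : m ∈ A := A.max'_mem hne
    have hsub : A ⊆ Finset.range (m + 1) := by
      intro a ha
      simp only [Finset.mem_range]
      exact Nat.lt_succ_of_le (A.le_max' a ha)
    have hcard : n + 1 ≤ m + 1 := by
      calc n + 1 = A.card := h.symm
        _ ≤ (Finset.range (m + 1)).card := Finset.card_le_card hsub
        _ = m + 1 := Finset.card_range _
    have hnm : n ≤ m := by omega
    have hA' : (A.erase m).card = n := by
      rw [Finset.card_erase_of_mem hmem, h]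
      omega
    calc ∑ i ∈ Finset.range (n + 1), i
        = ∑ i ∈ Finset.range n, i + n := Finset.sum_range_succ _ _
      _ ≤ ∑ a ∈ A.erase m, a + m := add_le_add (ih _ hA') hnm
      _ = ∑ a ∈ A, a := Finset.sum_erase_add A _ hmem

lemma triangle_le_sum_inj {n : ℕ} (f : Fin n → ℕ) (hf : Function.Injective f) :
    ∑ i ∈ Finset.range n, i ≤ ∑ s : Fin n, f s := by
  have := triangle_le_sum n (Finset.image f Finset.univ)
    (by rw [Finset.card_image_of_injective _ hf, Finset.card_univ, Fintype.card_fin])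
  rwa [Finset.sum_image (fun a _ b _ h => hf h)] at this

/-- the key ℕ identity -/
lemma two_mul_T (N : ℕ) : 2 * (∑ i ∈ Finset.range N, (i + 1)) = N * (N + 1) := by
  have h1 : ∑ i ∈ Finset.range N, (i + 1) = ∑ i ∈ Finset.range (N + 1), i := by
    rw [Finset.sum_range_succ' (fun i => i) N]
    simp
  rw [h1, mul_comm, Finset.sum_range_id_mul_two (N + 1)]
  simp [mul_comm]

lemma T_eq (N : ℕ) (hN : 1 ≤ N) :
    ((∑ i ∈ Finset.range N, (i + 1) : ℕ) : ℝ≥0∞) = (N : ℝ≥0∞) * (((N : ℝ≥0∞) + 1) / 2) := by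
  have h : (2 : ℝ≥0∞) * ((∑ i ∈ Finset.range N, (i + 1) : ℕ) : ℝ≥0∞)
      = (N : ℝ≥0∞) * ((N : ℝ≥0∞) + 1) := by
    exact_mod_cast two_mul_T N
  rw [← mul_div_assoc, ← h, mul_comm, mul_div_assoc, ENNReal.div_self (by norm_num) (by norm_num),
    mul_one]

/-- tsum reindexing through PMF.map -/
lemma tsum_map {α β : Type*} (p : PMF α) (f : α → β) (g : β → ℝ≥0∞) :
    ∑' b, (p.map f) b * g b = ∑' a, p a * g (f a) := by
  classical
  have h1 : ∀ b, (p.map f) b * g b = ∑' a, (if b = f a then p a * g b else 0) := by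
    intro b
    rw [PMF.map_apply, ← ENNReal.tsum_mul_right]
    refine tsum_congr fun a => ?_
    split <;> simp
  rw [tsum_congr h1, ENNReal.tsum_comm]
  refine tsum_congr fun a => ?_
  have h2 : (fun b => if b = f a then p a * g b else 0)
      = fun b => if b = f a then p a * g (f a) else 0 := by
    funext b
    by_cases h : b = f a <;> simp [h]
  rw [h2]
  exact tsum_ite_eq (f a) (fun _ => p a * g (f a))

end NeedleAux

open Fin.NatCast

/-- The unrestricted black-box complexity of the Needle problem on a set of
size `N` is exactly `(N+1)/2`. -/
theorem stmt3 (N : ℕ) (hN : 1 ≤ N) :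
    (∀ μ : PMF (List Bool → Fin N), ∃ s : Fin N,
        ((N : ℝ≥0∞) + 1) / 2 ≤ BBC.expHitTime μ (fun x => decide (x = s)) {s}) ∧
    (∃ μ : PMF (List Bool → Fin N), ∀ s : Fin N,
        BBC.expHitTime μ (fun x => decide (x = s)) {s} ≤ ((N : ℝ≥0∞) + 1) / 2) := by
    classical
  have hN0 : (N : ℝ≥0∞) ≠ 0 := Nat.cast_ne_zero.mpr (by omega)
  have hNt : (N : ℝ≥0∞) ≠ ⊤ := ENNReal.natCast_ne_top N
  haveI : NeZero N := ⟨by omega⟩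
  set T : ℕ := ∑ i ∈ Finset.range N, (i + 1) with hT
  have hTcast := NeedleAux.T_eq N hN
  constructor
  · -- lower bound
    intro μ
    -- per-strategy bound:
    have key : ∀ q : List Bool → Fin N,
        (T : ℝ≥0∞) ≤ ∑ s : Fin N, (BBC.hitTime q (fun x => decide (x = s)) {s} : ℝ≥0∞) := by
      intro q
      by_cases hall : ∀ s : Fin N, ∃ k, NeedleAux.seq q k = s
      · -- all targets eventually hit
        set k0 : Fin N → ℕ := fun s => Nat.find (hall s) with hk0
        have hhit : ∀ s, NeedleAux.seq q (k0 s) = s := fun s => Nat.find_spec (hall s)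
        have hmin : ∀ s, ∀ j < k0 s, NeedleAux.seq q j ≠ s :=
          fun s j hj => Nat.find_min (hall s) hj
        have hht : ∀ s, BBC.hitTime q (fun x => decide (x = s)) {s} = (k0 s : ℕ∞) + 1 :=
          fun s => NeedleAux.hitTime_eq q s (k0 s) (hhit s) (hmin s)
        have hinj : Function.Injective k0 := by
          intro a b hab
          rw [← hhit a, ← hhit b, hab]
        have hnat : T ≤ ∑ s : Fin N, (k0 s + 1) := by
          rw [Finset.sum_add_distrib, hT, Finset.sum_add_distrib]
          apply add_le_add
          · exact NeedleAux.triangle_le_sum_inj k0 hinj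
          · simp
        calc (T : ℝ≥0∞) ≤ ((∑ s : Fin N, (k0 s + 1) : ℕ) : ℝ≥0∞) := by exact_mod_cast hnat
          _ = ∑ s : Fin N, (BBC.hitTime q (fun x => decide (x = s)) {s} : ℝ≥0∞) := by
              rw [Nat.cast_sum]
              refine Finset.sum_congr rfl fun s _ => ?_
              rw [hht s]
              simp
      · push_neg at hall
        obtain ⟨s, hs⟩ := hall
        have : BBC.hitTime q (fun x => decide (x = s)) {s} = ⊤ :=
          NeedleAux.hitTime_eq_top q s (fun k => hs k)
        calc (T : ℝ≥0∞) ≤ ⊤ := le_top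
          _ = (BBC.hitTime q (fun x => decide (x = s)) {s} : ℝ≥0∞) := by rw [this]; simp
          _ ≤ _ := Finset.single_le_sum
              (f := fun t : Fin N => (BBC.hitTime q (fun x => decide (x = t)) {t} : ℝ≥0∞))
              (fun _ _ => zero_le) (Finset.mem_univ s)
    -- sum of expectations ≥ T
    have hsum : (T : ℝ≥0∞) ≤ ∑ s : Fin N, BBC.expHitTime μ (fun x => decide (x = s)) {s} := by
      unfold BBC.expHitTime
      have hswap : ∑ s : Fin N, ∑' (q : List Bool → Fin N),
            μ q * (BBC.hitTime q (fun x => decide (x = s)) {s} : ℝ≥0∞)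
          = ∑' (q : List Bool → Fin N), ∑ s : Fin N,
            μ q * (BBC.hitTime q (fun x => decide (x = s)) {s} : ℝ≥0∞) := by
        rw [← tsum_fintype (L := SummationFilter.unconditional _), ENNReal.tsum_comm]
        exact tsum_congr fun q => tsum_fintype _
      rw [hswap]
      calc (T : ℝ≥0∞) = ∑' q, μ q * (T : ℝ≥0∞) := by
            rw [ENNReal.tsum_mul_right, μ.tsum_coe, one_mul]
        _ ≤ ∑' q, ∑ s : Fin N, μ q * (BBC.hitTime q (fun x => decide (x = s)) {s} : ℝ≥0∞) := by
            apply ENNReal.tsum_le_tsum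
            intro q
            rw [← Finset.mul_sum]
            exact mul_le_mul_right (key q) _
    -- pick a maximizer
    obtain ⟨s0, -, hs0⟩ := Finset.exists_max_image Finset.univ
      (fun s : Fin N => BBC.expHitTime μ (fun x => decide (x = s)) {s}) ⟨⟨0, hN⟩, Finset.mem_univ _⟩
    refine ⟨s0, ?_⟩
    have hle : (T : ℝ≥0∞) ≤ (N : ℝ≥0∞) * BBC.expHitTime μ (fun x => decide (x = s0)) {s0} := by
      calc (T : ℝ≥0∞) ≤ ∑ s : Fin N, BBC.expHitTime μ (fun x => decide (x = s)) {s} := hsum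
        _ ≤ ∑ _s : Fin N, BBC.expHitTime μ (fun x => decide (x = s0)) {s0} :=
            Finset.sum_le_sum (fun s _ => hs0 s (Finset.mem_univ s))
        _ = (N : ℝ≥0∞) * _ := by rw [Finset.sum_const, Finset.card_univ, Fintype.card_fin]; simp [nsmul_eq_mul]
    rw [hTcast] at hle
    exact (ENNReal.mul_le_mul_iff_right hN0 hNt).mp hle
  · -- upper bound: uniform cyclic strategies
    set strat : Fin N → (List Bool → Fin N) := fun c l => c + (l.length : Fin N) with hstrat
    have hseq : ∀ c k, NeedleAux.seq (strat c) k = c + (k : Fin N) := by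
      intro c k
      simp [NeedleAux.seq, hstrat]
    refine ⟨(PMF.uniformOfFintype (Fin N)).map strat, fun s => ?_⟩
    have hht : ∀ c : Fin N, BBC.hitTime (strat c) (fun x => decide (x = s)) {s}
        = ((s - c : Fin N).val : ℕ∞) + 1 := by
      intro c
      apply NeedleAux.hitTime_eq
      · rw [hseq, Fin.cast_val_eq_self, add_comm]
        exact sub_add_cancel s c
      · intro j hj heq
        rw [hseq] at heq
        have hjc : (j : Fin N) = s - c := eq_sub_of_add_eq' heq
        have hjv : j % N = (s - c).val := by
          rw [← Fin.val_natCast, hjc]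
        have hmod := Nat.mod_le j N
        omega
    rw [BBC.expHitTime, NeedleAux.tsum_map]
    have : ∑' c : Fin N, (PMF.uniformOfFintype (Fin N)) c
          * (BBC.hitTime (strat c) (fun x => decide (x = s)) {s} : ℝ≥0∞)
        = (N : ℝ≥0∞)⁻¹ * ∑ c : Fin N, (((s - c : Fin N).val : ℝ≥0∞) + 1) := by
      rw [tsum_fintype, Finset.mul_sum]
      refine Finset.sum_congr rfl fun c _ => ?_
      rw [PMF.uniformOfFintype_apply, Fintype.card_fin, hht c]
      congr 1
      simp
    rw [this]
    have hre : ∑ c : Fin N, (((s - c : Fin N).val : ℝ≥0∞) + 1)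
        = ∑ j : Fin N, ((j.val : ℝ≥0∞) + 1) :=
      Fintype.sum_equiv (Equiv.subLeft s) _ _ (fun c => rfl)
    have hTsum : ∑ j : Fin N, ((j.val : ℝ≥0∞) + 1) = (T : ℝ≥0∞) := by
      rw [hT]
      push_cast
      rw [Fin.sum_univ_eq_sum_range (fun i => (i : ℝ≥0∞) + 1) N]
    rw [hre, hTsum, hTcast, ← mul_assoc, ENNReal.inv_mul_cancel hN0 hNt, one_mul]
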